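/- For 2 ≤ p < ∞ and 1 < p' ≤ 2 with 1/p + 1/p' = 1, let f be a nonnegative unit vector in L^p(X,μ) and g a nonnegative unit vector in L^{p'}(X,μ). Then ∫ f g dμ ≤ 1 - (1/(p·2^{p-1})) ‖f - D_{p'}(g)‖_p^p, where D_{p'}(g) = g^{p'-1} is the duality map applied to g. -/

import Mathlib

open MeasureTheory

lemma superadd_rpow {x y q : ℝ} (hx : 0 ≤ x) (hy : 0 ≤ y) (hq : 1 ≤ q) :
    x ^ q + y ^ q ≤ (x + y) ^ q := by
  lift x to NNReal using hx
  lift y to NNReal using hy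
  exact_mod_cast NNReal.add_rpow_le_rpow_add x y hq

lemma aux_int {q : ℝ} (hq : 0 ≤ q) {c : ℝ} (hc : 0 ≤ c) :
    (∫ x in (0:ℝ)..c, ((x / 2) ^ q : ℝ)) = c ^ (q + 1) / ((q + 1) * 2 ^ q) := by
  have hq1 : q + 1 ≠ 0 := by positivity
  have h2q : (0:ℝ) < 2 ^ q := Real.rpow_pos_of_pos (by norm_num) q
  rw [intervalIntegral.integral_comp_div (fun x => x ^ q) (by norm_num : (2:ℝ) ≠ 0),
    integral_rpow (Or.inl (by linarith))]
  have h21 : (2:ℝ) ^ (q+1) = 2 ^ q * 2 := by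
    rw [Real.rpow_add (by norm_num : (0:ℝ) < 2), Real.rpow_one]
  have hdiv : (c/2) ^ (q+1) = c ^ (q+1) / (2 ^ q * 2) := by
    rw [Real.div_rpow hc (by norm_num), h21]
  rw [zero_div, Real.zero_rpow hq1, smul_eq_mul, sub_zero, hdiv, div_div]
  field_simp

lemma key_ge {p : ℝ} (hp : 2 ≤ p) {a b : ℝ} (hb : 0 ≤ b) (hab : b ≤ a) :
    (a - b) ^ p / (p * 2 ^ (p - 1)) ≤ a ^ p / p - b ^ p / p - b ^ (p - 1) * (a - b) := by
  set q := p - 1 with hqdef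
  have hq : 1 ≤ q := by simp [hqdef]; linarith
  have hq0 : 0 ≤ q := by linarith
  have hp0 : 0 < p := by linarith
  have hqp : q + 1 = p := by simp [hqdef]
  have ha : 0 ≤ a := le_trans hb hab
  have hint : (∫ t in b..a, (((t - b) / 2) ^ q : ℝ)) ≤ ∫ t in b..a, (t ^ q - b ^ q : ℝ) := by
    apply intervalIntegral.integral_mono_on hab
    · exact ((((continuous_id.sub continuous_const).div_const 2).rpow_const
        (fun _ => Or.inr hq0)).intervalIntegrable b a)
    · exact (((Real.continuous_rpow_const hq0).sub continuous_const).intervalIntegrable b a)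
    · intro t ht
      have ht1 := ht.1
      have ht2 := ht.2
      have h1 : ((t - b) / 2) ^ q ≤ (t - b) ^ q :=
        Real.rpow_le_rpow (by linarith) (by linarith) hq0
      have h2 : b ^ q + (t - b) ^ q ≤ t ^ q := by
        have := superadd_rpow hb (by linarith : (0:ℝ) ≤ t - b) hq
        rwa [add_sub_cancel] at this
      linarith
  have hL : (∫ t in b..a, (((t - b) / 2) ^ q : ℝ)) = (a - b) ^ (q + 1) / ((q + 1) * 2 ^ q) := by
    rw [intervalIntegral.integral_comp_sub_right (fun t => (t / 2) ^ q) b, sub_self]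
    exact aux_int hq0 (by linarith)
  have hR : (∫ t in b..a, (t ^ q - b ^ q : ℝ))
      = (a ^ (q + 1) - b ^ (q + 1)) / (q + 1) - b ^ q * (a - b) := by
    rw [intervalIntegral.integral_sub ((Real.continuous_rpow_const hq0).intervalIntegrable b a)
      intervalIntegrable_const, integral_rpow (Or.inl (by linarith)),
      intervalIntegral.integral_const, smul_eq_mul]
    ring
  rw [hL, hR, hqp] at hint
  rw [sub_div] at hint
  linarith

lemma key_le {p : ℝ} (hp : 2 ≤ p) {a b : ℝ} (ha : 0 ≤ a) (hab : a ≤ b) :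
    (b - a) ^ p / (p * 2 ^ (p - 1)) ≤ a ^ p / p + (1 - 1 / p) * b ^ p - a * b ^ (p - 1) := by
  set q := p - 1 with hqdef
  have hq : 1 ≤ q := by simp [hqdef]; linarith
  have hq0 : 0 ≤ q := by linarith
  have hp0 : 0 < p := by linarith
  have hqp : q + 1 = p := by simp [hqdef]
  have hb : 0 ≤ b := le_trans ha hab
  have hint : (∫ t in a..b, (((b - t) / 2) ^ q : ℝ)) ≤ ∫ t in a..b, (b ^ q - t ^ q : ℝ) := by
    apply intervalIntegral.integral_mono_on hab
    · exact ((((continuous_const.sub continuous_id).div_const 2).rpow_const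
        (fun _ => Or.inr hq0)).intervalIntegrable a b)
    · exact ((continuous_const.sub (Real.continuous_rpow_const hq0)).intervalIntegrable a b)
    · intro t ht
      have ht1 := ht.1
      have ht2 := ht.2
      have ht0 : 0 ≤ t := le_trans ha ht1
      have h2 : t ^ q + ((b - t) / 2) ^ q ≤ ((b + t) / 2) ^ q := by
        have := superadd_rpow ht0 (by linarith : (0:ℝ) ≤ (b - t) / 2) hq
        have he : t + (b - t) / 2 = (b + t) / 2 := by ring
        rwa [he] at this
      have h3 : ((b + t) / 2) ^ q ≤ b ^ q :=
        Real.rpow_le_rpow (by linarith) (by linarith) hq0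
      linarith
  have hL : (∫ t in a..b, (((b - t) / 2) ^ q : ℝ)) = (b - a) ^ (q + 1) / ((q + 1) * 2 ^ q) := by
    rw [intervalIntegral.integral_comp_sub_left (fun t => (t / 2) ^ q) b, sub_self]
    exact aux_int hq0 (by linarith)
  have hR : (∫ t in a..b, (b ^ q - t ^ q : ℝ))
      = b ^ q * (b - a) - (b ^ (q + 1) - a ^ (q + 1)) / (q + 1) := by
    rw [intervalIntegral.integral_sub intervalIntegrable_const
      ((Real.continuous_rpow_const hq0).intervalIntegrable a b),
      integral_rpow (Or.inl (by linarith)), intervalIntegral.integral_const, smul_eq_mul]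
    ring
  rw [hL, hR, hqp] at hint
  rw [sub_div] at hint
  have hbp : b ^ p / p = (1 / p) * b ^ p := by ring
  have hbq : b ^ q * b = b ^ p := by
    rcases hb.eq_or_lt with h0 | h0
    · rw [← h0, Real.zero_rpow (by linarith : q ≠ 0), Real.zero_rpow hp0.ne', zero_mul]
    · rw [← hqp]
      exact (Real.rpow_add_one h0.ne' q).symm
  have he1 : b ^ q * (b - a) = b ^ p - b ^ q * a := by rw [← hbq]; ring
  have he2 : (1 - 1 / p) * b ^ p = b ^ p - b ^ p / p := by ring
  have he3 : b ^ q * a = a * b ^ q := by ring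
  linarith

lemma key_ineq {p : ℝ} (hp : 2 ≤ p) {a b : ℝ} (ha : 0 ≤ a) (hb : 0 ≤ b) :
    a * b ^ (p - 1) + |a - b| ^ p / (p * 2 ^ (p - 1)) ≤ a ^ p / p + (1 - 1 / p) * b ^ p := by
  have hp0 : 0 < p := by linarith
  rcases le_total b a with h | h
  · rw [abs_of_nonneg (by linarith)]
    have hk := key_ge hp hb h
    have hbq : b ^ (p - 1) * b = b ^ p := by
      rcases hb.eq_or_lt with h0 | h0
      · rw [← h0, Real.zero_rpow (by linarith : p - 1 ≠ 0), Real.zero_rpow hp0.ne', zero_mul]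
      · rw [← Real.rpow_add_one h0.ne' (p - 1)]
        norm_num
    have he1 : b ^ (p - 1) * (a - b) = a * b ^ (p - 1) - b ^ p := by rw [← hbq]; ring
    have he2 : (1 - 1 / p) * b ^ p = b ^ p - b ^ p / p := by ring
    linarith
  · rw [abs_of_nonpos (by linarith), neg_sub]
    have hk := key_le hp ha h
    linarith

lemma abs_sub_rpow_le {u v p : ℝ} (hu : 0 ≤ u) (hv : 0 ≤ v) (hp : 0 ≤ p) :
    |u - v| ^ p ≤ 2 ^ p * (u ^ p + v ^ p) := by
  have h2p : (0:ℝ) ≤ 2 ^ p := Real.rpow_nonneg (by norm_num) p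
  rcases le_total u v with h | h
  · rw [abs_of_nonpos (by linarith), neg_sub]
    calc (v - u) ^ p ≤ (2 * v) ^ p := Real.rpow_le_rpow (by linarith) (by linarith) hp
    _ = 2 ^ p * v ^ p := Real.mul_rpow (by norm_num) hv
    _ ≤ 2 ^ p * (u ^ p + v ^ p) :=
      mul_le_mul_of_nonneg_left (le_add_of_nonneg_left (Real.rpow_nonneg hu p)) h2p
  · rw [abs_of_nonneg (by linarith)]
    calc (u - v) ^ p ≤ (2 * u) ^ p := Real.rpow_le_rpow (by linarith) (by linarith) hp
    _ = 2 ^ p * u ^ p := Real.mul_rpow (by norm_num) hu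
    _ ≤ 2 ^ p * (u ^ p + v ^ p) :=
      mul_le_mul_of_nonneg_left (le_add_of_nonneg_right (Real.rpow_nonneg hv p)) h2p


noncomputable def Lnorm {X : Type*} [MeasurableSpace X] (μ : Measure X) (p : ℝ) (f : X → ℝ) : ℝ :=
  (∫ x, |f x| ^ p ∂μ) ^ (1 / p)

/-- Hölder's inequality with remainder (eq. (main2)): for `2 ≤ p < ∞`, `1 < p' ≤ 2`,
`1/p + 1/p' = 1`, nonnegative unit vectors `f ∈ L^p`, `g ∈ L^{p'}`,
`∫ f g ≤ 1 - (1/(p 2^{p-1})) ‖f - D_{p'}(g)‖_p^p` where `D_{p'}(g) = g^{p'-1}`. -/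
theorem stmt1 {X : Type*} [MeasurableSpace X] (μ : Measure X) (p p' : ℝ)
    (hp : 2 ≤ p) (hp' : 1 < p') (hp'2 : p' ≤ 2) (hpp' : 1 / p + 1 / p' = 1)
    (f g : X → ℝ) (hf0 : ∀ x, 0 ≤ f x) (hg0 : ∀ x, 0 ≤ g x)
    (hf : MemLp f (ENNReal.ofReal p) μ) (hg : MemLp g (ENNReal.ofReal p') μ)
    (hfn : Lnorm μ p f = 1) (hgn : Lnorm μ p' g = 1) :
    ∫ x, f x * g x ∂μ ≤
      1 - 1 / (p * 2 ^ (p - 1)) * (Lnorm μ p (fun x => f x - g x ^ (p' - 1))) ^ p := by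
  have hp0 : 0 < p := by linarith
  have hp'0 : 0 < p' := by linarith
  have hppmul : p + p' = p * p' := by
    field_simp at hpp'
    linarith
  have h1 : (p' - 1) * p = p' := by linear_combination -hppmul
  have h2 : (p' - 1) * (p - 1) = 1 := by linear_combination -hppmul
  have hgpow : ∀ x, (g x ^ (p' - 1)) ^ p = g x ^ p' := fun x => by
    rw [← Real.rpow_mul (hg0 x), h1]
  have h2pos : (0:ℝ) < 2 ^ (p - 1) := Real.rpow_pos_of_pos (by norm_num) _
  have hkey : ∀ x, f x * g x + |f x - g x ^ (p' - 1)| ^ p / (p * 2 ^ (p - 1))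
      ≤ f x ^ p / p + (1 - 1 / p) * g x ^ p' := by
    intro x
    have hk := key_ineq hp (hf0 x) (Real.rpow_nonneg (hg0 x) (p' - 1))
    rw [← Real.rpow_mul (hg0 x), h2, Real.rpow_one, hgpow x] at hk
    exact hk
  -- integrability
  have hfae := hf.aestronglyMeasurable
  have hgae := hg.aestronglyMeasurable
  have hfp_int : Integrable (fun x => f x ^ p) μ := by
    have hne : ENNReal.ofReal p ≠ 0 := by
      simp only [ne_eq, ENNReal.ofReal_eq_zero, not_le]; linarith
    have h := hf.integrable_norm_rpow hne ENNReal.ofReal_ne_top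
    rw [ENNReal.toReal_ofReal hp0.le] at h
    refine h.congr (Filter.Eventually.of_forall fun x => ?_)
    show ‖f x‖ ^ p = f x ^ p
    rw [Real.norm_eq_abs, abs_of_nonneg (hf0 x)]
  have hgp_int : Integrable (fun x => g x ^ p') μ := by
    have hne : ENNReal.ofReal p' ≠ 0 := by
      simp only [ne_eq, ENNReal.ofReal_eq_zero, not_le]; linarith
    have h := hg.integrable_norm_rpow hne ENNReal.ofReal_ne_top
    rw [ENNReal.toReal_ofReal hp'0.le] at h
    refine h.congr (Filter.Eventually.of_forall fun x => ?_)
    show ‖g x‖ ^ p' = g x ^ p'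
    rw [Real.norm_eq_abs, abs_of_nonneg (hg0 x)]
  have hhae : AEStronglyMeasurable (fun x => g x ^ (p' - 1)) μ :=
    (Real.continuous_rpow_const (by linarith)).comp_aestronglyMeasurable hgae
  have hdae : AEStronglyMeasurable (fun x => |f x - g x ^ (p' - 1)| ^ p) μ :=
    ((Real.continuous_rpow_const hp0.le).comp continuous_abs).comp_aestronglyMeasurable
      (hfae.sub hhae)
  have hd_int : Integrable (fun x => |f x - g x ^ (p' - 1)| ^ p) μ := by
    refine Integrable.mono' ((hfp_int.add hgp_int).const_mul (2 ^ p)) hdae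
      (Filter.Eventually.of_forall fun x => ?_)
    rw [Real.norm_eq_abs, abs_of_nonneg (Real.rpow_nonneg (abs_nonneg _) p)]
    have h := abs_sub_rpow_le (hf0 x) (Real.rpow_nonneg (hg0 x) (p' - 1)) hp0.le
    rwa [hgpow x] at h
  have hi1 : Integrable (fun x => f x ^ p / p) μ := hfp_int.div_const p
  have hi2 : Integrable (fun x => (1 - 1 / p) * g x ^ p') μ := hgp_int.const_mul _
  have hi3 : Integrable (fun x => |f x - g x ^ (p' - 1)| ^ p / (p * 2 ^ (p - 1))) μ :=
    hd_int.div_const _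
  have hi12 : Integrable (fun x => f x ^ p / p + (1 - 1 / p) * g x ^ p') μ := hi1.add hi2
  have hi123 : Integrable (fun x => f x ^ p / p + (1 - 1 / p) * g x ^ p'
      - |f x - g x ^ (p' - 1)| ^ p / (p * 2 ^ (p - 1))) μ := hi12.sub hi3
  have hfg_int : Integrable (fun x => f x * g x) μ := by
    refine Integrable.mono' hi12 (hfae.mul hgae) (Filter.Eventually.of_forall fun x => ?_)
    show ‖f x * g x‖ ≤ f x ^ p / p + (1 - 1 / p) * g x ^ p'
    rw [Real.norm_eq_abs, abs_of_nonneg (mul_nonneg (hf0 x) (hg0 x))]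
    have hk := hkey x
    have hnn : 0 ≤ |f x - g x ^ (p' - 1)| ^ p / (p * 2 ^ (p - 1)) := by positivity
    linarith
  -- norms
  have hA : ∫ x, f x ^ p ∂μ = 1 := by
    have hfeq : (fun x => |f x| ^ p) = fun x => f x ^ p :=
      funext fun x => by rw [abs_of_nonneg (hf0 x)]
    have h0 : 0 ≤ ∫ x, |f x| ^ p ∂μ :=
      integral_nonneg fun x => Real.rpow_nonneg (abs_nonneg _) _
    have hc := congrArg (fun t : ℝ => t ^ p) hfn
    simp only [Lnorm, Real.one_rpow] at hc
    rw [← Real.rpow_mul h0, one_div, inv_mul_cancel₀ hp0.ne', Real.rpow_one] at hc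
    rwa [hfeq] at hc
  have hB : ∫ x, g x ^ p' ∂μ = 1 := by
    have hgeq : (fun x => |g x| ^ p') = fun x => g x ^ p' :=
      funext fun x => by rw [abs_of_nonneg (hg0 x)]
    have h0 : 0 ≤ ∫ x, |g x| ^ p' ∂μ :=
      integral_nonneg fun x => Real.rpow_nonneg (abs_nonneg _) _
    have hc := congrArg (fun t : ℝ => t ^ p') hgn
    simp only [Lnorm, Real.one_rpow] at hc
    rw [← Real.rpow_mul h0, one_div, inv_mul_cancel₀ hp'0.ne', Real.rpow_one] at hc
    rwa [hgeq] at hc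
  -- main estimate
  have hint : ∫ x, f x * g x ∂μ ≤
      ∫ x, (f x ^ p / p + (1 - 1 / p) * g x ^ p'
        - |f x - g x ^ (p' - 1)| ^ p / (p * 2 ^ (p - 1))) ∂μ := by
    refine integral_mono hfg_int hi123 fun x => ?_
    show f x * g x ≤ f x ^ p / p + (1 - 1 / p) * g x ^ p'
      - |f x - g x ^ (p' - 1)| ^ p / (p * 2 ^ (p - 1))
    linarith [hkey x]
  have hsplit : (∫ x, (f x ^ p / p + (1 - 1 / p) * g x ^ p'
        - |f x - g x ^ (p' - 1)| ^ p / (p * 2 ^ (p - 1))) ∂μ)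
      = (∫ x, f x ^ p ∂μ) / p + (1 - 1 / p) * (∫ x, g x ^ p' ∂μ)
        - (∫ x, |f x - g x ^ (p' - 1)| ^ p ∂μ) / (p * 2 ^ (p - 1)) := by
    rw [integral_sub hi12 hi3, integral_add hi1 hi2, integral_div, integral_const_mul,
      integral_div]
  set B := ∫ x, |f x - g x ^ (p' - 1)| ^ p ∂μ with hBdef
  have hB0 : 0 ≤ B :=
    integral_nonneg fun x => Real.rpow_nonneg (abs_nonneg _) _
  have hLp : (Lnorm μ p (fun x => f x - g x ^ (p' - 1))) ^ p = B := by
    simp only [Lnorm]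
    rw [← Real.rpow_mul hB0, one_div, inv_mul_cancel₀ hp0.ne', Real.rpow_one]
  rw [hLp]
  rw [hsplit, hA, hB] at hint
  have hconv : 1 / (p * 2 ^ (p - 1)) * B = B / (p * 2 ^ (p - 1)) := by ring
  rw [hconv]
  have hone : 1 / p + (1 - 1 / p) * 1 = 1 := by ring
  linarith
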